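/- Let G = (V, E) be a graph with a linear order < on E. Then the sum over all spanning forests F of G of 2^{i(F)+e(F)} equals 2^{|E|}, where i(F) and e(F) denote the numbers of internally and externally active edges of F. -/

import Mathlib

set_option maxHeartbeats 1000000


open Finset

attribute [local instance] Classical.propDecidable

/-- A multigraph on vertex type `V` with edge index type `E` is given by a map
`ends : E → Sym2 V` (loops and parallel edges are allowed).  For an edge subset
`A ⊆ E`, `edgeGraph ends A` is the simple graph on `V` whose adjacency is
witnessed by some edge of `A`; it determines the connected components of the
spanning subgraph `(V, A)`. -/
def edgeGraph {V E : Type} (ends : E → Sym2 V) (A : Finset E) : SimpleGraph V where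
  Adj a b := a ≠ b ∧ ∃ e ∈ A, ends e = s(a, b)
  symm := ⟨by
    rintro a b ⟨hab, e, he, hs⟩
    exact ⟨Ne.symm hab, e, he, by rw [hs, Sym2.eq_swap]⟩⟩
  loopless := ⟨by rintro a ⟨h, -⟩; exact h rfl⟩

/-- `kc ends A` is the number of connected components of the spanning subgraph `(V, A)`. -/
noncomputable def kc {V E : Type} (ends : E → Sym2 V) (A : Finset E) : ℕ :=
  Nat.card (edgeGraph ends A).ConnectedComponent

/-- `(V, A)` is a spanning forest of `(V, E)`: it is a forest
(`|A| + k((V,A)) = |V|`, which rules out loops, parallel edges and cycles)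
with as many connected components as the whole graph. -/
def IsSpanningForest {V E : Type} [Fintype V] [Fintype E] (ends : E → Sym2 V)
    (A : Finset E) : Prop :=
  A.card + kc ends A = Fintype.card V ∧ kc ends A = kc ends Finset.univ

/-- `F - e + f`. -/
def swapEdge {E : Type} [DecidableEq E] (A : Finset E) (e f : E) : Finset E :=
  insert f (A.erase e)

/-- `e` is internally active in the spanning forest `(V, A)`. -/
def InternallyActive {V E : Type} [Fintype V] [Fintype E] [DecidableEq E] [LinearOrder E]
    (ends : E → Sym2 V) (A : Finset E) (e : E) : Prop :=
  e ∈ A ∧ ¬ ∃ f, f ∉ A ∧ e < f ∧ IsSpanningForest ends (swapEdge A e f)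

/-- `f` is externally active in the spanning forest `(V, A)`. -/
def ExternallyActive {V E : Type} [Fintype V] [Fintype E] [DecidableEq E] [LinearOrder E]
    (ends : E → Sym2 V) (A : Finset E) (f : E) : Prop :=
  f ∉ A ∧ ¬ ∃ e, e ∈ A ∧ f < e ∧ IsSpanningForest ends (swapEdge A e f)

/-- The set `E_i(F)` of internally active edges of the spanning forest `F = (V, A)`. -/
noncomputable def intAct {V E : Type} [Fintype V] [Fintype E] [DecidableEq E] [LinearOrder E]
    (ends : E → Sym2 V) (A : Finset E) : Finset E :=
  Finset.univ.filter (InternallyActive ends A)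

/-- The set `E_e(F)` of externally active edges of the spanning forest `F = (V, A)`. -/
noncomputable def extAct {V E : Type} [Fintype V] [Fintype E] [DecidableEq E] [LinearOrder E]
    (ends : E → Sym2 V) (A : Finset E) : Finset E :=
  Finset.univ.filter (ExternallyActive ends A)

section basic
variable {V E : Type} [DecidableEq E] {ends : E → Sym2 V}

set_option linter.unusedSectionVars false

lemma edgeGraph_mono {A B : Finset E} (h : A ⊆ B) : edgeGraph ends A ≤ edgeGraph ends B := by
  rintro a b ⟨hab, e, he, hs⟩; exact ⟨hab, e, h he, hs⟩

lemma reach_mono {A B : Finset E} (h : A ⊆ B) {u w : V}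
    (hr : (edgeGraph ends A).Reachable u w) : (edgeGraph ends B).Reachable u w :=
  hr.mono (edgeGraph_mono h)

lemma reach_of_mem {A : Finset E} {e : E} {a b : V} (he : e ∈ A) (hs : ends e = s(a,b)) :
    (edgeGraph ends A).Reachable a b := by
  by_cases hab : a = b
  · exact hab ▸ SimpleGraph.Reachable.refl a
  · exact SimpleGraph.Adj.reachable ⟨hab, e, he, hs⟩


/-- decomposition of reachability after inserting one edge -/
lemma reach_insert_elim {A : Finset E} {g : E} {a b u w : V} (hg : ends g = s(a,b))
    (h : (edgeGraph ends (insert g A)).Reachable u w) :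
    (edgeGraph ends A).Reachable u w ∨
      ((edgeGraph ends A).Reachable u a ∧ (edgeGraph ends A).Reachable b w) ∨
      ((edgeGraph ends A).Reachable u b ∧ (edgeGraph ends A).Reachable a w) := by
  obtain ⟨p⟩ := h
  induction p with
  | nil => exact Or.inl (SimpleGraph.Reachable.refl _)
  | @cons x y z hadj p ih =>
    obtain ⟨hxy, e, he, hs⟩ := hadj
    rcases Finset.mem_insert.mp he with rfl | heA
    · rw [hg] at hs
      rcases Sym2.eq_iff.mp hs.symm with ⟨rfl, rfl⟩ | ⟨rfl, rfl⟩
      · rcases ih with h1 | ⟨h1, h2⟩ | ⟨h1, h2⟩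
        · exact Or.inr (Or.inl ⟨SimpleGraph.Reachable.refl _, h1⟩)
        · exact Or.inr (Or.inl ⟨SimpleGraph.Reachable.refl _, h2⟩)
        · exact Or.inl h2
      · rcases ih with h1 | ⟨h1, h2⟩ | ⟨h1, h2⟩
        · exact Or.inr (Or.inr ⟨SimpleGraph.Reachable.refl _, h1⟩)
        · exact Or.inl h2
        · exact Or.inr (Or.inr ⟨SimpleGraph.Reachable.refl _, h2⟩)
    · have hxyr : (edgeGraph ends A).Reachable x y := SimpleGraph.Adj.reachable ⟨hxy, e, heA, hs⟩
      rcases ih with h1 | ⟨h1, h2⟩ | ⟨h1, h2⟩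
      · exact Or.inl (hxyr.trans h1)
      · exact Or.inr (Or.inl ⟨hxyr.trans h1, h2⟩)
      · exact Or.inr (Or.inr ⟨hxyr.trans h1, h2⟩)

variable [Fintype V]


noncomputable instance (A : Finset E) : Fintype (edgeGraph ends A).ConnectedComponent :=
  @Quotient.fintype V _ (edgeGraph ends A).reachableSetoid (fun _ _ => Classical.propDecidable _)

/-- the natural map on components induced by a subset inclusion -/
def ccMap {A B : Finset E} (h : A ⊆ B) :
    (edgeGraph ends A).ConnectedComponent → (edgeGraph ends B).ConnectedComponent :=
  fun c => c.map (SimpleGraph.Hom.ofLE (edgeGraph_mono h))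

lemma ccMap_mk {A B : Finset E} (h : A ⊆ B) (v : V) :
    ccMap h ((edgeGraph ends A).connectedComponentMk v)
      = (edgeGraph ends B).connectedComponentMk v := rfl

lemma ccMap_surjective {A B : Finset E} (h : A ⊆ B) : Function.Surjective (ccMap (ends := ends) h) := by
  intro c
  refine c.ind (fun v => ⟨(edgeGraph ends A).connectedComponentMk v, rfl⟩)

lemma kc_mono {A B : Finset E} (h : A ⊆ B) : kc ends B ≤ kc ends A :=
  Nat.card_le_card_of_surjective _ (ccMap_surjective h)
end basic

set_option linter.unusedSectionVars false

section insertlem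
variable {V E : Type} [DecidableEq E] [Fintype V] {ends : E → Sym2 V} {A : Finset E} {g : E} {a b : V}

lemma kc_insert_of_reach (hg : ends g = s(a,b)) (hcon : a = b ∨ (edgeGraph ends A).Reachable a b) :
    kc ends (insert g A) = kc ends A := by
  have hab : (edgeGraph ends A).Reachable a b := by
    rcases hcon with rfl | h; exacts [SimpleGraph.Reachable.refl a, h]
  refine (Nat.card_eq_of_bijective (ccMap (Finset.subset_insert g A)) ⟨?_, ccMap_surjective _⟩).symm
  intro c1 c2 heq
  induction c1 using SimpleGraph.ConnectedComponent.ind with | _ u =>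
  induction c2 using SimpleGraph.ConnectedComponent.ind with | _ w =>
  rw [ccMap_mk, ccMap_mk, SimpleGraph.ConnectedComponent.eq] at heq
  rw [SimpleGraph.ConnectedComponent.eq]
  rcases reach_insert_elim hg heq with h | ⟨h1, h2⟩ | ⟨h1, h2⟩
  · exact h
  · exact (h1.trans hab).trans h2
  · exact (h1.trans hab.symm).trans h2

/-- the `Option`-valued component map -/
noncomputable def tau (ends : E → Sym2 V) (A : Finset E) (g : E) (b : V) :
    (edgeGraph ends A).ConnectedComponent → Option (edgeGraph ends (insert g A)).ConnectedComponent :=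
  SimpleGraph.ConnectedComponent.lift
    (fun v => if (edgeGraph ends A).Reachable v b then none
      else some ((edgeGraph ends (insert g A)).connectedComponentMk v))
    (by
      intro v w p _
      have hr : (edgeGraph ends A).Reachable v w := ⟨p⟩
      by_cases h : (edgeGraph ends A).Reachable v b
      · rw [if_pos h, if_pos (hr.symm.trans h)]
      · rw [if_neg h, if_neg (fun hw => h (hr.trans hw))]
        exact congrArg some ((SimpleGraph.ConnectedComponent.eq).mpr (reach_mono (Finset.subset_insert g A) hr)))

lemma tau_mk (v : V) : tau ends A g b ((edgeGraph ends A).connectedComponentMk v)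
    = if (edgeGraph ends A).Reachable v b then none
      else some ((edgeGraph ends (insert g A)).connectedComponentMk v) := rfl

lemma tau_injective (hg : ends g = s(a,b)) : Function.Injective (tau ends A g b) := by
  intro c1 c2 heq
  induction c1 using SimpleGraph.ConnectedComponent.ind with | _ u =>
  induction c2 using SimpleGraph.ConnectedComponent.ind with | _ w =>
  rw [tau_mk, tau_mk] at heq
  rw [SimpleGraph.ConnectedComponent.eq]
  by_cases hu : (edgeGraph ends A).Reachable u b
  · rw [if_pos hu] at heq
    by_cases hw : (edgeGraph ends A).Reachable w b
    · exact hu.trans hw.symm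
    · rw [if_neg hw] at heq; cases heq
  · rw [if_neg hu] at heq
    by_cases hw : (edgeGraph ends A).Reachable w b
    · rw [if_pos hw] at heq; cases heq
    · rw [if_neg hw] at heq
      have := (SimpleGraph.ConnectedComponent.eq).mp (Option.some_injective _ heq)
      rcases reach_insert_elim hg this with h | ⟨h1, h2⟩ | ⟨h1, h2⟩
      · exact h
      · exact absurd h2.symm hw
      · exact absurd h1 hu

lemma kc_le_insert_add_one (hg : ends g = s(a,b)) : kc ends A ≤ kc ends (insert g A) + 1 := by
  have h := Nat.card_le_card_of_injective _ (tau_injective (A := A) hg)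
  simpa [kc, Nat.card_eq_fintype_card] using h

lemma kc_insert_of_not_reach (hg : ends g = s(a,b)) (hne : a ≠ b)
    (hnr : ¬ (edgeGraph ends A).Reachable a b) :
    kc ends A = kc ends (insert g A) + 1 := by
  have hbij : Function.Bijective (tau ends A g b) := by
    refine ⟨tau_injective hg, ?_⟩
    rintro (_ | c)
    · exact ⟨(edgeGraph ends A).connectedComponentMk b, by rw [tau_mk, if_pos (SimpleGraph.Reachable.refl b)]⟩
    · induction c using SimpleGraph.ConnectedComponent.ind with | _ u =>
      by_cases hu : (edgeGraph ends A).Reachable u b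
      · refine ⟨(edgeGraph ends A).connectedComponentMk a, ?_⟩
        rw [tau_mk, if_neg hnr]
        refine congrArg some ((SimpleGraph.ConnectedComponent.eq).mpr ?_)
        have hadj : (edgeGraph ends (insert g A)).Adj a b := ⟨hne, g, Finset.mem_insert_self g A, hg⟩
        exact hadj.reachable.trans (reach_mono (Finset.subset_insert g A) hu.symm)
      · exact ⟨(edgeGraph ends A).connectedComponentMk u, by rw [tau_mk, if_neg hu]⟩
  have h := Nat.card_eq_of_bijective _ hbij
  simpa [kc, Nat.card_eq_fintype_card] using h

lemma kc_insert_le : kc ends (insert g A) ≤ kc ends A := kc_mono (Finset.subset_insert g A)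
end insertlem

section forest
set_option linter.unusedSectionVars false
variable {V E : Type} [DecidableEq E] [Fintype V] {ends : E → Sym2 V} {A B : Finset E} {e g : E} {a b : V}

lemma sym2_pair (z : Sym2 V) : ∃ x y, z = s(x,y) := by
  induction z using Sym2.ind with | _ x y => exact ⟨x, y, rfl⟩

lemma kc_le_insert_add_one' (e : E) : kc ends A ≤ kc ends (insert e A) + 1 := by
  obtain ⟨x, y, hxy⟩ := sym2_pair (V := V) (ends e)
  exact kc_le_insert_add_one hxy

lemma kc_empty : kc ends (∅ : Finset E) = Fintype.card V := by
  have : Function.Bijective ((edgeGraph ends (∅ : Finset E)).connectedComponentMk) := by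
    constructor
    · intro u w h
      obtain ⟨p⟩ := (SimpleGraph.ConnectedComponent.eq).mp h
      cases p with
      | nil => rfl
      | cons hadj _ => exact absurd hadj.2 (by simp)
    · intro c; exact c.ind (fun v => ⟨v, rfl⟩)
  have h := Nat.card_eq_of_bijective _ this
  simpa [kc, Nat.card_eq_fintype_card] using h.symm

lemma card_V_le (A : Finset E) : Fintype.card V ≤ A.card + kc ends A := by
  induction A using Finset.induction_on with
  | empty => rw [kc_empty]; simp
  | @insert e A he ih =>
    calc Fintype.card V ≤ A.card + kc ends A := ih
    _ ≤ A.card + (kc ends (insert e A) + 1) := by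
        exact Nat.add_le_add_left (kc_le_insert_add_one' e) _
    _ = (insert e A).card + kc ends (insert e A) := by
        rw [Finset.card_insert_of_notMem he]; omega

lemma forest_not_reach_erase (hF : A.card + kc ends A = Fintype.card V) (he : e ∈ A)
    (hg : ends e = s(a,b)) : a ≠ b ∧ ¬ (edgeGraph ends (A.erase e)).Reachable a b := by
  have hins : insert e (A.erase e) = A := Finset.insert_erase he
  by_contra hcon
  have hreach : a = b ∨ (edgeGraph ends (A.erase e)).Reachable a b := by
    by_cases hab : a = b
    · exact Or.inl hab
    · exact Or.inr (by push_neg at hcon; exact hcon hab)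
  have heq : kc ends A = kc ends (A.erase e) := by
    conv_lhs => rw [← hins]
    exact kc_insert_of_reach hg hreach
  have hle := card_V_le (ends := ends) (A.erase e)
  rw [Finset.card_erase_of_mem he, ← heq] at hle
  have hpos : 0 < A.card := Finset.card_pos.mpr ⟨e, he⟩
  omega

lemma forest_kc_erase (hF : A.card + kc ends A = Fintype.card V) (he : e ∈ A) :
    kc ends (A.erase e) = kc ends A + 1 := by
  obtain ⟨x, y, hxy⟩ := sym2_pair (V := V) (ends e)
  obtain ⟨hne, hnr⟩ := forest_not_reach_erase hF he hxy
  have hins : insert e (A.erase e) = A := Finset.insert_erase he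
  have := kc_insert_of_not_reach (A := A.erase e) (g := e) hxy hne hnr
  rw [hins] at this; omega

lemma forest_no_loop (hF : A.card + kc ends A = Fintype.card V) (he : e ∈ A)
    (hd : (ends e).IsDiag) : False := by
  obtain ⟨x, y, hxy⟩ := sym2_pair (V := V) (ends e)
  have : x = y := by rw [hxy] at hd; exact Sym2.isDiag_iff_proj_eq.mp hd
  exact (forest_not_reach_erase hF he hxy).1 this

lemma kc_union_eq (h : ∀ f ∈ B, ∀ x y, ends f = s(x,y) →
    (x = y ∨ (edgeGraph ends A).Reachable x y)) : kc ends (A ∪ B) = kc ends A := by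
  induction B using Finset.induction_on with
  | empty => rw [Finset.union_empty]
  | @insert f B hf ih =>
    have hstep : A ∪ insert f B = insert f (A ∪ B) := Finset.union_insert f A B
    obtain ⟨x, y, hxy⟩ := sym2_pair (V := V) (ends f)
    have hcon := h f (Finset.mem_insert_self f B) x y hxy
    rw [hstep, kc_insert_of_reach hxy ?_, ih]
    · intro f' hf' x' y' h'; exact h f' (Finset.mem_insert_of_mem hf') x' y' h'
    · rcases hcon with h1 | h1
      · exact Or.inl h1
      · exact Or.inr (reach_mono Finset.subset_union_left h1)

lemma exists_augment (h : kc ends (A ∪ B) < kc ends A) :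
    ∃ f ∈ B, ∃ x y, ends f = s(x,y) ∧ x ≠ y ∧ ¬ (edgeGraph ends A).Reachable x y ∧
      kc ends A = kc ends (insert f A) + 1 := by
  by_contra hcon
  push_neg at hcon
  have : kc ends (A ∪ B) = kc ends A := by
    apply kc_union_eq
    intro f hf x y hxy
    by_contra hc
    push_neg at hc
    obtain ⟨hne, hnr⟩ := hc
    exact absurd (kc_insert_of_not_reach hxy hne hnr) (by
      have := hcon f hf x y hxy hne hnr; omega)
  omega
end forest

section exch
set_option linter.unusedSectionVars false
variable {V E : Type} [Fintype V] [Fintype E] [DecidableEq E] {ends : E → Sym2 V}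
  {A : Finset E} {e g : E} {a b : V}

lemma sf_no_loop (hF : IsSpanningForest ends A) (he : e ∈ A) : ¬ (ends e).IsDiag :=
  fun hd => forest_no_loop hF.1 he hd

lemma no_sf_of_bridge (hB : kc ends (Finset.univ.erase g) ≠ kc ends (Finset.univ : Finset E))
    (hg : g ∉ A) : ¬ IsSpanningForest ends A := by
  rintro ⟨h1, h2⟩
  have hsub : A ⊆ Finset.univ.erase g := Finset.subset_erase.mpr ⟨Finset.subset_univ A, hg⟩
  have h3 := kc_mono (ends := ends) hsub
  have h4 := kc_mono (ends := ends) (Finset.erase_subset g (Finset.univ : Finset E))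
  omega

lemma exch_in (hF : IsSpanningForest ends A) (hgA : g ∈ A)
    (hNB : kc ends (Finset.univ.erase g) = kc ends (Finset.univ : Finset E)) :
    ∃ f, f ∉ A ∧ f ≠ g ∧ IsSpanningForest ends (swapEdge A g f) := by
  have hkA' : kc ends (A.erase g) = kc ends A + 1 := forest_kc_erase hF.1 hgA
  have hsub : A.erase g ⊆ Finset.univ.erase g :=
    Finset.erase_subset_erase g (Finset.subset_univ A)
  have hun : A.erase g ∪ Finset.univ.erase g = Finset.univ.erase g :=
    Finset.union_eq_right.mpr hsub
  have hlt : kc ends (A.erase g ∪ Finset.univ.erase g) < kc ends (A.erase g) := by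
    rw [hun, hNB, ← hF.2]; omega
  obtain ⟨f, hfmem, x, y, hxy, hne, hnr, hk⟩ := exists_augment hlt
  have hfg : f ≠ g := Finset.ne_of_mem_erase hfmem
  have hfA : f ∉ A := by
    intro hfA
    have : f ∈ A.erase g := Finset.mem_erase.mpr ⟨hfg, hfA⟩
    exact hnr (SimpleGraph.Adj.reachable ⟨hne, f, this, hxy⟩)
  refine ⟨f, hfA, hfg, ?_, ?_⟩
  · rw [swapEdge]
    rw [Finset.card_insert_of_notMem (fun h => hfA (Finset.mem_of_mem_erase h)),
      Finset.card_erase_of_mem hgA]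
    have h1 := hF.1
    have hpos : 0 < A.card := Finset.card_pos.mpr ⟨g, hgA⟩
    omega
  · rw [swapEdge]
    rw [← hF.2] at hNB ⊢
    omega

lemma walk_avoid {e0 : E} {a cc : V} (hs0 : ends e0 = s(a,cc)) {bb : V} :
    ∀ {u : V} (w : (edgeGraph ends A).Walk u bb), a ∉ w.support →
      (edgeGraph ends (A.erase e0)).Reachable u bb := by
  intro u w
  induction w with
  | nil => intro _; exact SimpleGraph.Reachable.refl _
  | @cons x y z hadj' w' ih =>
    intro hnot
    rw [SimpleGraph.Walk.support_cons, List.mem_cons] at hnot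
    push_neg at hnot
    obtain ⟨hax, hasup⟩ := hnot
    obtain ⟨hxy, e, he, hs⟩ := hadj'
    have hee0 : e ≠ e0 := by
      intro h
      rw [h, hs0] at hs
      rcases Sym2.eq_iff.mp hs with ⟨h1, h2⟩ | ⟨h1, h2⟩
      · exact hax h1
      · cases h1; exact hasup (SimpleGraph.Walk.start_mem_support w')
    have hadj'' : (edgeGraph ends (A.erase e0)).Adj x y :=
      ⟨hxy, e, Finset.mem_erase.mpr ⟨hee0, he⟩, hs⟩
    exact hadj''.reachable.trans (ih hasup)

lemma exch_out (hF : IsSpanningForest ends A) (hgA : g ∉ A) (hnd : ¬ (ends g).IsDiag) :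
    ∃ e ∈ A, IsSpanningForest ends (swapEdge A e g) := by
  obtain ⟨a, b, hsg⟩ := sym2_pair (V := V) (ends g)
  have hab : a ≠ b := fun h => hnd (by rw [hsg, h]; exact Sym2.mk_isDiag_iff.mpr rfl)
  -- a and b are connected in A
  have hreach : (edgeGraph ends A).Reachable a b := by
    by_contra hnr
    have h1 := kc_insert_of_not_reach (A := A) hsg hab hnr
    have h2 := kc_mono (ends := ends) (Finset.subset_univ (insert g A))
    rw [hF.2] at h1
    omega
  obtain ⟨p⟩ := hreach
  have hpath := p.toPath.2
  -- destructure the path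
  rcases hq : (p.toPath : (edgeGraph ends A).Walk a b) with _ | @⟨_, c, _, hadj, q⟩
  · exact absurd rfl hab
  · rw [hq] at hpath
    rw [SimpleGraph.Walk.cons_isPath_iff] at hpath
    obtain ⟨hqpath, hanotin⟩ := hpath
    obtain ⟨hac, e0, he0, hs0⟩ := hadj
    have hcb : (edgeGraph ends (A.erase e0)).Reachable c b := walk_avoid hs0 q hanotin
    refine ⟨e0, he0, ?_⟩
    have hgne0 : g ≠ e0 := fun h => hgA (h ▸ he0)
    have hgnotin : g ∉ A.erase e0 := fun h => hgA (Finset.mem_of_mem_erase h)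
    -- B = insert g (A.erase e0)
    have hreachB : (edgeGraph ends (swapEdge A e0 g)).Reachable a c := by
      have h1 : (edgeGraph ends (swapEdge A e0 g)).Adj a b :=
        ⟨hab, g, Finset.mem_insert_self g _, hsg⟩
      have h2 : (edgeGraph ends (swapEdge A e0 g)).Reachable b c :=
        (reach_mono (Finset.subset_insert g _) hcb).symm
      exact h1.reachable.trans h2
    have hkey : insert e0 (swapEdge A e0 g) = insert g A := by
      rw [swapEdge, Finset.insert_comm, Finset.insert_erase he0]
    have hkB : kc ends (insert e0 (swapEdge A e0 g)) = kc ends (swapEdge A e0 g) :=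
      kc_insert_of_reach hs0 (Or.inr hreachB)
    have hle1 : kc ends (swapEdge A e0 g) ≤ kc ends A := by
      rw [← hkB, hkey]; exact kc_insert_le
    have hge : kc ends (Finset.univ : Finset E) ≤ kc ends (swapEdge A e0 g) :=
      kc_mono (Finset.subset_univ _)
    have hcard : (swapEdge A e0 g).card = A.card := by
      rw [swapEdge, Finset.card_insert_of_notMem hgnotin, Finset.card_erase_of_mem he0]
      have hpos : 0 < A.card := Finset.card_pos.mpr ⟨e0, he0⟩
      omega
    have h2 := hF.2
    have h1 := hF.1
    constructor
    · rw [hcard]; omega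
    · omega
end exch

section minors
set_option linter.unusedSectionVars false
variable {V E : Type} [DecidableEq E] [Fintype V] [Fintype E] {ends : E → Sym2 V} {g : E} {a b : V}

/-- deleted edge-function -/
def dEnds (ends : E → Sym2 V) (g : E) : {e : E // e ≠ g} → Sym2 V := fun e => ends e.val

/-- contraction vertex map -/
noncomputable def qmap (a b : V) : V → V := fun v => if v = b then a else v

/-- contracted edge-function -/
noncomputable def cEnds (ends : E → Sym2 V) (g : E) (a b : V) : {e : E // e ≠ g} → Sym2 V :=
  fun e => (ends e.val).map (qmap a b)

/-- push a subset of the minor's edges back into `E` -/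
def dmap (g : E) (A' : Finset {e : E // e ≠ g}) : Finset E :=
  A'.map (Function.Embedding.subtype _)

lemma mem_dmap {A' : Finset {e : E // e ≠ g}} {x : E} :
    x ∈ dmap g A' ↔ ∃ h : x ≠ g, (⟨x, h⟩ : {e : E // e ≠ g}) ∈ A' := by
  constructor
  · intro hx
    rw [dmap, Finset.mem_map] at hx
    obtain ⟨y, hy, rfl⟩ := hx
    exact ⟨y.2, hy⟩
  · rintro ⟨h, hmem⟩
    rw [dmap, Finset.mem_map]
    exact ⟨⟨x, h⟩, hmem, rfl⟩

lemma mem_dmap' {A' : Finset {e : E // e ≠ g}} {x : {e : E // e ≠ g}} :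
    x.val ∈ dmap g A' ↔ x ∈ A' := by
  rw [mem_dmap]
  constructor
  · rintro ⟨h, hmem⟩; convert hmem
  · intro h; exact ⟨x.2, by convert h⟩

lemma g_not_mem_dmap (A' : Finset {e : E // e ≠ g}) : g ∉ dmap g A' := by
  rw [mem_dmap]; rintro ⟨h, -⟩; exact h rfl

lemma card_dmap (A' : Finset {e : E // e ≠ g}) : (dmap g A').card = A'.card :=
  Finset.card_map _

lemma dmap_univ : dmap g (Finset.univ : Finset {e : E // e ≠ g}) = Finset.univ.erase g := by
  ext x
  rw [mem_dmap, Finset.mem_erase]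
  constructor
  · rintro ⟨h, -⟩; exact ⟨h, Finset.mem_univ x⟩
  · rintro ⟨h, -⟩; exact ⟨h, Finset.mem_univ _⟩

lemma dmap_insert (A' : Finset {e : E // e ≠ g}) (x : {e : E // e ≠ g}) :
    dmap g (insert x A') = insert x.val (dmap g A') := Finset.map_insert _ _ _

lemma dmap_erase (A' : Finset {e : E // e ≠ g}) (x : {e : E // e ≠ g}) :
    dmap g (A'.erase x) = (dmap g A').erase x.val := Finset.map_erase _ _ _

lemma dmap_swapEdge (A' : Finset {e : E // e ≠ g}) (x y : {e : E // e ≠ g}) :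
    dmap g (swapEdge A' x y) = swapEdge (dmap g A') x.val y.val := by
  rw [swapEdge, swapEdge, dmap_insert, dmap_erase]

lemma insert_dmap_swapEdge (A' : Finset {e : E // e ≠ g}) (x y : {e : E // e ≠ g}) :
    insert g (dmap g (swapEdge A' x y)) = swapEdge (insert g (dmap g A')) x.val y.val := by
  rw [dmap_swapEdge, swapEdge, swapEdge,
    Finset.erase_insert_of_ne (fun h : g = x.val => x.2 h.symm), Finset.insert_comm]

lemma del_graph (A' : Finset {e : E // e ≠ g}) :
    edgeGraph (dEnds ends g) A' = edgeGraph ends (dmap g A') := by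
  ext x y
  constructor
  · rintro ⟨hxy, e, he, hs⟩; exact ⟨hxy, e.val, mem_dmap'.mpr he, hs⟩
  · rintro ⟨hxy, e, he, hs⟩
    rw [mem_dmap] at he
    obtain ⟨hne, hmem⟩ := he
    exact ⟨hxy, ⟨e, hne⟩, hmem, hs⟩

lemma del_kc (A' : Finset {e : E // e ≠ g}) :
    kc (dEnds ends g) A' = kc ends (dmap g A') := by
  unfold kc; rw [del_graph]
end minors

section contraction
set_option linter.unusedSectionVars false
variable {V E : Type} [DecidableEq E] [Fintype V] [Fintype E] {ends : E → Sym2 V} {g : E} {a b : V}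

lemma qmap_b (hab : a ≠ b) : qmap a b b = a := by rw [qmap]; simp

lemma qmap_ne_b (hab : a ≠ b) (v : V) : qmap a b v ≠ b := by
  rw [qmap]
  by_cases h : v = b
  · rw [if_pos h]; exact hab
  · rw [if_neg h]; exact h

lemma qmap_of_ne (hv : v ≠ b) : qmap a b v = v := by rw [qmap]; simp [hv]

lemma reach_qmap (hg : ends g = s(a,b)) (hab : a ≠ b) {A' : Finset {e : E // e ≠ g}} (u : V) :
    (edgeGraph ends (insert g (dmap g A'))).Reachable u (qmap a b u) := by
  by_cases h : u = b
  · subst h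
    rw [qmap_b hab]
    exact (SimpleGraph.Adj.reachable ⟨(Ne.symm hab), g, Finset.mem_insert_self _ _,
      by rw [hg, Sym2.eq_swap]⟩)
  · rw [qmap_of_ne h]

lemma creach (hg : ends g = s(a,b)) (hab : a ≠ b) {A' : Finset {e : E // e ≠ g}} {x y : V}
    (h : (edgeGraph (cEnds ends g a b) A').Reachable x y) :
    (x = b ∧ y = b) ∨ (x ≠ b ∧ y ≠ b ∧ (edgeGraph ends (insert g (dmap g A'))).Reachable x y) := by
  obtain ⟨p⟩ := h
  induction p with
  | nil =>
    rename_i u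
    by_cases h : u = b
    · exact Or.inl ⟨h, h⟩
    · exact Or.inr ⟨h, h, SimpleGraph.Reachable.refl _⟩
  | @cons x m z hadj w ih =>
    obtain ⟨hxm, e', he', hs⟩ := hadj
    obtain ⟨p', r', hpr⟩ := sym2_pair (V := V) (ends e'.val)
    rw [cEnds, hpr, Sym2.map_pair_eq] at hs
    have hpref : (edgeGraph ends (insert g (dmap g A'))).Reachable p' r' :=
      reach_of_mem (Finset.mem_insert_of_mem (mem_dmap'.mpr he')) hpr
    have hxr : (edgeGraph ends (insert g (dmap g A'))).Reachable x m := by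
      rcases Sym2.eq_iff.mp hs with ⟨h1, h2⟩ | ⟨h1, h2⟩
      · rw [← h1, ← h2]
        exact ((reach_qmap hg hab p').symm.trans hpref).trans (reach_qmap hg hab r')
      · rw [← h1, ← h2]
        exact ((reach_qmap hg hab r').symm.trans hpref.symm).trans (reach_qmap hg hab p')
    have hxb : x ≠ b := by
      rcases Sym2.eq_iff.mp hs with ⟨h1, -⟩ | ⟨-, h2⟩
      · rw [← h1]; exact qmap_ne_b hab p'
      · rw [← h2]; exact qmap_ne_b hab r'
    have hmb : m ≠ b := by
      rcases Sym2.eq_iff.mp hs with ⟨-, h2⟩ | ⟨h1, -⟩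
      · rw [← h2]; exact qmap_ne_b hab r'
      · rw [← h1]; exact qmap_ne_b hab p'
    rcases ih with ⟨h1, h2⟩ | ⟨h1, h2, h3⟩
    · exact absurd h1 hmb
    · exact Or.inr ⟨hxb, h2, hxr.trans h3⟩

lemma breach (hg : ends g = s(a,b)) (hab : a ≠ b) {A' : Finset {e : E // e ≠ g}} {u w : V}
    (h : (edgeGraph ends (insert g (dmap g A'))).Reachable u w) :
    (edgeGraph (cEnds ends g a b) A').Reachable (qmap a b u) (qmap a b w) := by
  obtain ⟨p⟩ := h
  induction p with
  | nil => exact SimpleGraph.Reachable.refl _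
  | @cons x m z hadj w' ih =>
    refine SimpleGraph.Reachable.trans ?_ ih
    obtain ⟨hxm, e, he, hs⟩ := hadj
    rcases Finset.mem_insert.mp he with rfl | heA
    · rw [hg] at hs
      rcases Sym2.eq_iff.mp hs.symm with ⟨rfl, rfl⟩ | ⟨rfl, rfl⟩
      · rw [qmap_of_ne hab, qmap_b hab]
      · rw [qmap_of_ne hab, qmap_b hab]
    · rw [mem_dmap] at heA
      obtain ⟨hne, he'⟩ := heA
      have hcs : cEnds ends g a b ⟨e, hne⟩ = s(qmap a b x, qmap a b m) := by
        rw [cEnds]; dsimp only; rw [hs, Sym2.map_pair_eq]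
      exact reach_of_mem (A := A') he' hcs

end contraction

section conkc
set_option linter.unusedSectionVars false
variable {V E : Type} [DecidableEq E] [Fintype V] [Fintype E] {ends : E → Sym2 V} {g : E} {a b : V}

noncomputable def theta (ends : E → Sym2 V) (g : E) (a b : V) (hg : ends g = s(a,b)) (hab : a ≠ b)
    (A' : Finset {e : E // e ≠ g}) :
    (edgeGraph (cEnds ends g a b) A').ConnectedComponent →
      Option (edgeGraph ends (insert g (dmap g A'))).ConnectedComponent :=
  SimpleGraph.ConnectedComponent.lift
    (fun x => if x = b then none
      else some ((edgeGraph ends (insert g (dmap g A'))).connectedComponentMk x))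
    (by
      intro v w p _
      have hr : (edgeGraph (cEnds ends g a b) A').Reachable v w := ⟨p⟩
      rcases creach hg hab hr with ⟨h1, h2⟩ | ⟨h1, h2, h3⟩
      · rw [if_pos h1, if_pos h2]
      · rw [if_neg h1, if_neg h2]
        exact congrArg some ((SimpleGraph.ConnectedComponent.eq).mpr h3))

lemma theta_mk (hg : ends g = s(a,b)) (hab : a ≠ b) (A' : Finset {e : E // e ≠ g}) (v : V) :
    theta ends g a b hg hab A' ((edgeGraph (cEnds ends g a b) A').connectedComponentMk v)
      = if v = b then none
        else some ((edgeGraph ends (insert g (dmap g A'))).connectedComponentMk v) := rfl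

lemma con_kc (hg : ends g = s(a,b)) (hab : a ≠ b) (A' : Finset {e : E // e ≠ g}) :
    kc (cEnds ends g a b) A' = kc ends (insert g (dmap g A')) + 1 := by
  have hbij : Function.Bijective (theta ends g a b hg hab A') := by
    constructor
    · intro c1 c2 heq
      induction c1 using SimpleGraph.ConnectedComponent.ind with | _ u =>
      induction c2 using SimpleGraph.ConnectedComponent.ind with | _ w =>
      rw [theta_mk hg hab, theta_mk hg hab] at heq
      by_cases hu : u = b
      · rw [if_pos hu] at heq
        by_cases hw : w = b
        · rw [hu, hw]
        · rw [if_neg hw] at heq; cases heq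
      · rw [if_neg hu] at heq
        by_cases hw : w = b
        · rw [if_pos hw] at heq; cases heq
        · rw [if_neg hw] at heq
          have h2 := (SimpleGraph.ConnectedComponent.eq).mp (Option.some_injective _ heq)
          have h3 := breach hg hab h2
          rw [qmap_of_ne hu, qmap_of_ne hw] at h3
          exact (SimpleGraph.ConnectedComponent.eq).mpr h3
    · rintro (_ | c)
      · exact ⟨(edgeGraph (cEnds ends g a b) A').connectedComponentMk b,
          by rw [theta_mk hg hab, if_pos rfl]⟩
      · induction c using SimpleGraph.ConnectedComponent.ind with | _ u =>
        refine ⟨(edgeGraph (cEnds ends g a b) A').connectedComponentMk (qmap a b u), ?_⟩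
        rw [theta_mk hg hab, if_neg (qmap_ne_b hab u)]
        exact congrArg some ((SimpleGraph.ConnectedComponent.eq).mpr (reach_qmap hg hab u).symm)
  have h := Nat.card_eq_of_bijective _ hbij
  simpa [kc, Nat.card_eq_fintype_card] using h
end conkc

section transfer
set_option linter.unusedSectionVars false
variable {V E : Type} [DecidableEq E] [Fintype V] [Fintype E] [LinearOrder E]
  {ends : E → Sym2 V} {g : E} {a b : V}

lemma dmap_smap (F : Finset E) : dmap g (F.subtype (· ≠ g)) = F.erase g := by
  rw [dmap, Finset.subtype_map, Finset.filter_ne']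

lemma smap_dmap (A' : Finset {e : E // e ≠ g}) : (dmap g A').subtype (· ≠ g) = A' := by
  ext x
  rw [Finset.mem_subtype, mem_dmap']

lemma mem_insert_dmap (F' : Finset {e : E // e ≠ g}) (e' : {e : E // e ≠ g}) :
    e'.val ∈ insert g (dmap g F') ↔ e' ∈ F' := by
  rw [Finset.mem_insert, mem_dmap']
  exact ⟨fun h => h.resolve_left e'.2, Or.inr⟩

lemma sf_con_iff (hg : ends g = s(a,b)) (hab : a ≠ b) (A' : Finset {e : E // e ≠ g}) :
    IsSpanningForest (cEnds ends g a b) A' ↔ IsSpanningForest ends (insert g (dmap g A')) := by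
  have h1 := con_kc hg hab A'
  have h2 := con_kc hg hab (Finset.univ : Finset {e : E // e ≠ g})
  rw [dmap_univ, Finset.insert_erase (Finset.mem_univ g)] at h2
  have h3 : (insert g (dmap g A')).card = A'.card + 1 := by
    rw [Finset.card_insert_of_notMem (g_not_mem_dmap A'), card_dmap]
  unfold IsSpanningForest
  rw [h1, h2, h3]
  omega

lemma sf_del_iff (hNB : kc ends (Finset.univ.erase g) = kc ends (Finset.univ : Finset E))
    (A' : Finset {e : E // e ≠ g}) :
    IsSpanningForest (dEnds ends g) A' ↔ IsSpanningForest ends (dmap g A') := by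
  have h1 := del_kc (ends := ends) A'
  have h2 := del_kc (ends := ends) (Finset.univ : Finset {e : E // e ≠ g})
  rw [dmap_univ] at h2
  have h3 : (dmap g A').card = A'.card := card_dmap A'
  unfold IsSpanningForest
  rw [h1, h2, h3, hNB]

lemma int_con_iff (hg : ends g = s(a,b)) (hab : a ≠ b) (F' : Finset {e : E // e ≠ g})
    (e' : {e : E // e ≠ g}) :
    InternallyActive ends (insert g (dmap g F')) e'.val ↔
      InternallyActive (cEnds ends g a b) F' e' := by
  unfold InternallyActive
  rw [mem_insert_dmap]
  apply and_congr_right'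
  rw [not_iff_not]
  constructor
  · rintro ⟨f, hf, hlt, hsf⟩
    have hfg : f ≠ g := by rintro rfl; exact hf (Finset.mem_insert_self _ _)
    refine ⟨⟨f, hfg⟩, fun hmem => hf ((mem_insert_dmap F' ⟨f, hfg⟩).mpr hmem),
      Subtype.mk_lt_mk.mpr hlt, ?_⟩
    rw [sf_con_iff hg hab, insert_dmap_swapEdge]
    exact hsf
  · rintro ⟨f', hf', hlt, hsf⟩
    refine ⟨f'.val, fun hmem => hf' ((mem_insert_dmap F' f').mp hmem),
      Subtype.coe_lt_coe.mpr hlt, ?_⟩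
    rw [← insert_dmap_swapEdge, ← sf_con_iff hg hab]
    exact hsf

lemma ext_con_iff (hmin : ∀ f : E, f ≠ g → g < f) (hg : ends g = s(a,b)) (hab : a ≠ b)
    (F' : Finset {e : E // e ≠ g}) (f' : {e : E // e ≠ g}) :
    ExternallyActive ends (insert g (dmap g F')) f'.val ↔
      ExternallyActive (cEnds ends g a b) F' f' := by
  unfold ExternallyActive
  rw [mem_insert_dmap]
  apply and_congr_right'
  rw [not_iff_not]
  constructor
  · rintro ⟨e, he, hlt, hsf⟩
    have heg : e ≠ g := by
      rintro rfl
      exact absurd (hmin f'.val f'.2) (lt_asymm hlt)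
    refine ⟨⟨e, heg⟩, (mem_insert_dmap F' ⟨e, heg⟩).mp he, Subtype.mk_lt_mk.mpr hlt, ?_⟩
    rw [sf_con_iff hg hab, insert_dmap_swapEdge]
    exact hsf
  · rintro ⟨e', he', hlt, hsf⟩
    refine ⟨e'.val, (mem_insert_dmap F' e').mpr he', Subtype.coe_lt_coe.mpr hlt, ?_⟩
    rw [← insert_dmap_swapEdge, ← sf_con_iff hg hab]
    exact hsf

lemma mem_dmap_iff (F' : Finset {e : E // e ≠ g}) (e' : {e : E // e ≠ g}) :
    e'.val ∈ dmap g F' ↔ e' ∈ F' := mem_dmap'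

lemma int_del_iff (hmin : ∀ f : E, f ≠ g → g < f)
    (hNB : kc ends (Finset.univ.erase g) = kc ends (Finset.univ : Finset E))
    (F' : Finset {e : E // e ≠ g}) (e' : {e : E // e ≠ g}) :
    InternallyActive ends (dmap g F') e'.val ↔ InternallyActive (dEnds ends g) F' e' := by
  unfold InternallyActive
  rw [mem_dmap']
  apply and_congr_right'
  rw [not_iff_not]
  constructor
  · rintro ⟨f, hf, hlt, hsf⟩
    have hfg : f ≠ g := ne_of_gt (lt_trans (hmin e'.val e'.2) hlt)
    refine ⟨⟨f, hfg⟩, fun hmem => hf (mem_dmap'.mpr hmem), Subtype.mk_lt_mk.mpr hlt, ?_⟩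
    rw [sf_del_iff hNB, dmap_swapEdge]
    exact hsf
  · rintro ⟨f', hf', hlt, hsf⟩
    refine ⟨f'.val, fun hmem => hf' (mem_dmap'.mp hmem), Subtype.coe_lt_coe.mpr hlt, ?_⟩
    rw [← dmap_swapEdge, ← sf_del_iff hNB]
    exact hsf

lemma ext_del_iff (hmin : ∀ f : E, f ≠ g → g < f)
    (hNB : kc ends (Finset.univ.erase g) = kc ends (Finset.univ : Finset E))
    (F' : Finset {e : E // e ≠ g}) (f' : {e : E // e ≠ g}) :
    ExternallyActive ends (dmap g F') f'.val ↔ ExternallyActive (dEnds ends g) F' f' := by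
  unfold ExternallyActive
  rw [mem_dmap']
  apply and_congr_right'
  rw [not_iff_not]
  constructor
  · rintro ⟨e, he, hlt, hsf⟩
    have heg : e ≠ g := by
      rintro rfl
      exact absurd (hmin f'.val f'.2) (lt_asymm hlt)
    refine ⟨⟨e, heg⟩, mem_dmap'.mp he, Subtype.mk_lt_mk.mpr hlt, ?_⟩
    rw [sf_del_iff hNB, dmap_swapEdge]
    exact hsf
  · rintro ⟨e', he', hlt, hsf⟩
    refine ⟨e'.val, mem_dmap'.mpr he', Subtype.coe_lt_coe.mpr hlt, ?_⟩
    rw [← dmap_swapEdge, ← sf_del_iff hNB]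
    exact hsf
end transfer

section gact
set_option linter.unusedSectionVars false
variable {V E : Type} [DecidableEq E] [Fintype V] [Fintype E] [LinearOrder E]
  {ends : E → Sym2 V} {g : E} {a b : V} {F : Finset E}

lemma g_not_in_sf_loop (hd : (ends g).IsDiag) (hF : IsSpanningForest ends F) : g ∉ F :=
  fun h => sf_no_loop hF h hd

lemma ext_g_loop (hd : (ends g).IsDiag) (hgF : g ∉ F) : ExternallyActive ends F g := by
  refine ⟨hgF, ?_⟩
  rintro ⟨e, he, hlt, hsf⟩
  exact sf_no_loop hsf (Finset.mem_insert_self g _) hd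

lemma int_g_bridge (hB : kc ends (Finset.univ.erase g) ≠ kc ends (Finset.univ : Finset E))
    (hgF : g ∈ F) : InternallyActive ends F g := by
  refine ⟨hgF, ?_⟩
  rintro ⟨f, hf, hlt, hsf⟩
  have hgnot : g ∉ swapEdge F g f := by
    rw [swapEdge]
    simp only [Finset.mem_insert, Finset.mem_erase]
    rintro (h | ⟨h, -⟩)
    · exact absurd h (ne_of_lt hlt)
    · exact h rfl
  exact no_sf_of_bridge hB hgnot hsf

lemma not_int_g (hmin : ∀ f : E, f ≠ g → g < f)
    (hNB : kc ends (Finset.univ.erase g) = kc ends (Finset.univ : Finset E))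
    (hF : IsSpanningForest ends F) (hgF : g ∈ F) : ¬ InternallyActive ends F g := by
  rintro ⟨-, hnot⟩
  obtain ⟨f, hf, hfg, hsf⟩ := exch_in hF hgF hNB
  exact hnot ⟨f, hf, hmin f hfg, hsf⟩

lemma not_ext_g (hmin : ∀ f : E, f ≠ g → g < f) (hF : IsSpanningForest ends F)
    (hgF : g ∉ F) (hnd : ¬ (ends g).IsDiag) : ¬ ExternallyActive ends F g := by
  rintro ⟨-, hnot⟩
  obtain ⟨e, he, hsf⟩ := exch_out hF hgF hnd
  exact hnot ⟨e, he, hmin e (fun h => hgF (h ▸ he)), hsf⟩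

lemma mem_intAct (A : Finset E) (x : E) : x ∈ intAct ends A ↔ InternallyActive ends A x := by
  rw [intAct, Finset.mem_filter]; simp

lemma mem_extAct (A : Finset E) (x : E) : x ∈ extAct ends A ↔ ExternallyActive ends A x := by
  rw [extAct, Finset.mem_filter]; simp

lemma mem_dmap_act {A' : Finset {e : E // e ≠ g}} {x : E} :
    x ∈ dmap g A' ↔ ∃ h : x ≠ g, (⟨x, h⟩ : {e : E // e ≠ g}) ∈ A' := mem_dmap

/-- contraction: internal activities, bridge case -/
lemma intAct_con_bridge (hB : kc ends (Finset.univ.erase g) ≠ kc ends (Finset.univ : Finset E))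
    (hg : ends g = s(a,b)) (hab : a ≠ b) (F' : Finset {e : E // e ≠ g}) :
    intAct ends (insert g (dmap g F')) =
      insert g (dmap g (intAct (cEnds ends g a b) F')) := by
  ext x
  rw [mem_intAct, Finset.mem_insert, mem_dmap_act]
  by_cases hx : x = g
  · rw [hx]
    simp only [true_or, iff_true]
    exact int_g_bridge hB (Finset.mem_insert_self g _)
  · rw [int_con_iff hg hab F' ⟨x, hx⟩]
    constructor
    · intro h; exact Or.inr ⟨hx, (mem_intAct _ _).mpr h⟩
    · rintro (h | ⟨h1, h2⟩)
      · exact absurd h hx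
      · exact (mem_intAct _ _).mp h2

/-- contraction: internal activities, non-bridge case -/
lemma intAct_con_nonbridge (hmin : ∀ f : E, f ≠ g → g < f)
    (hNB : kc ends (Finset.univ.erase g) = kc ends (Finset.univ : Finset E))
    (hg : ends g = s(a,b)) (hab : a ≠ b) (F' : Finset {e : E // e ≠ g})
    (hSF : IsSpanningForest ends (insert g (dmap g F'))) :
    intAct ends (insert g (dmap g F')) = dmap g (intAct (cEnds ends g a b) F') := by
  ext x
  rw [mem_intAct, mem_dmap_act]
  by_cases hx : x = g
  · rw [hx]
    constructor
    · intro h; exact absurd h (not_int_g hmin hNB hSF (Finset.mem_insert_self _ _))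
    · rintro ⟨h, -⟩; exact absurd rfl h
  · rw [int_con_iff hg hab F' ⟨x, hx⟩]
    constructor
    · intro h; exact ⟨hx, (mem_intAct _ _).mpr h⟩
    · rintro ⟨h1, h2⟩; exact (mem_intAct _ _).mp h2

/-- contraction: external activities -/
lemma extAct_con (hmin : ∀ f : E, f ≠ g → g < f) (hg : ends g = s(a,b)) (hab : a ≠ b)
    (F' : Finset {e : E // e ≠ g}) :
    extAct ends (insert g (dmap g F')) = dmap g (extAct (cEnds ends g a b) F') := by
  ext x
  rw [mem_extAct, mem_dmap_act]
  by_cases hx : x = g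
  · rw [hx]
    constructor
    · rintro ⟨h, -⟩; exact absurd (Finset.mem_insert_self g _) h
    · rintro ⟨h, -⟩; exact absurd rfl h
  · rw [ext_con_iff hmin hg hab F' ⟨x, hx⟩]
    constructor
    · intro h; exact ⟨hx, (mem_extAct _ _).mpr h⟩
    · rintro ⟨h1, h2⟩; exact (mem_extAct _ _).mp h2

/-- deletion: internal activities -/
lemma intAct_del (hmin : ∀ f : E, f ≠ g → g < f)
    (hNB : kc ends (Finset.univ.erase g) = kc ends (Finset.univ : Finset E))
    (F' : Finset {e : E // e ≠ g}) :
    intAct ends (dmap g F') = dmap g (intAct (dEnds ends g) F') := by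
  ext x
  rw [mem_intAct, mem_dmap_act]
  by_cases hx : x = g
  · rw [hx]
    constructor
    · rintro ⟨h, -⟩; exact absurd h (g_not_mem_dmap F')
    · rintro ⟨h, -⟩; exact absurd rfl h
  · rw [int_del_iff hmin hNB F' ⟨x, hx⟩]
    constructor
    · intro h; exact ⟨hx, (mem_intAct _ _).mpr h⟩
    · rintro ⟨h1, h2⟩; exact (mem_intAct _ _).mp h2

/-- deletion: external activities, non-loop case -/
lemma extAct_del_nonloop (hmin : ∀ f : E, f ≠ g → g < f)
    (hNB : kc ends (Finset.univ.erase g) = kc ends (Finset.univ : Finset E))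
    (hnd : ¬ (ends g).IsDiag) (F' : Finset {e : E // e ≠ g})
    (hSF : IsSpanningForest ends (dmap g F')) :
    extAct ends (dmap g F') = dmap g (extAct (dEnds ends g) F') := by
  ext x
  rw [mem_extAct, mem_dmap_act]
  by_cases hx : x = g
  · rw [hx]
    constructor
    · intro h; exact absurd h (not_ext_g hmin hSF (g_not_mem_dmap F') hnd)
    · rintro ⟨h, -⟩; exact absurd rfl h
  · rw [ext_del_iff hmin hNB F' ⟨x, hx⟩]
    constructor
    · intro h; exact ⟨hx, (mem_extAct _ _).mpr h⟩
    · rintro ⟨h1, h2⟩; exact (mem_extAct _ _).mp h2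

/-- deletion: external activities, loop case -/
lemma extAct_del_loop (hmin : ∀ f : E, f ≠ g → g < f)
    (hNB : kc ends (Finset.univ.erase g) = kc ends (Finset.univ : Finset E))
    (hd : (ends g).IsDiag) (F' : Finset {e : E // e ≠ g}) :
    extAct ends (dmap g F') = insert g (dmap g (extAct (dEnds ends g) F')) := by
  ext x
  rw [mem_extAct, Finset.mem_insert, mem_dmap_act]
  by_cases hx : x = g
  · rw [hx]
    simp only [true_or, iff_true]
    exact ext_g_loop hd (g_not_mem_dmap F')
  · rw [ext_del_iff hmin hNB F' ⟨x, hx⟩]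
    constructor
    · intro h; exact Or.inr ⟨hx, (mem_extAct _ _).mpr h⟩
    · rintro (h | ⟨h1, h2⟩)
      · exact absurd h hx
      · exact (mem_extAct _ _).mp h2
end gact

section main
set_option linter.unusedSectionVars false

lemma smap_insert_dmap {E : Type} [DecidableEq E] [Fintype E] {g : E} (A' : Finset {e : E // e ≠ g}) :
    (insert g (dmap g A')).subtype (· ≠ g) = A' := by
  ext x
  rw [Finset.mem_subtype, Finset.mem_insert, mem_dmap']
  exact ⟨fun h => h.resolve_left x.2, Or.inr⟩

theorem main_aux (n : ℕ) : ∀ {V E : Type} [Fintype V] [Fintype E] [DecidableEq E]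
    [LinearOrder E] (ends : E → Sym2 V), Fintype.card E = n →
    ∑ F ∈ Finset.univ.powerset.filter (IsSpanningForest ends),
        2 ^ ((intAct ends F).card + (extAct ends F).card) = 2 ^ Fintype.card E := by
  induction n with
  | zero =>
    intro V E _ _ _ _ ends hcard
    have : IsEmpty E := Fintype.card_eq_zero_iff.mp hcard
    have hE : (Finset.univ : Finset E) = ∅ := Finset.univ_eq_empty
    have hSF : IsSpanningForest ends ∅ := ⟨by rw [kc_empty]; simp, by rw [hE]⟩
    rw [hcard, hE, Finset.powerset_empty, Finset.filter_singleton, if_pos hSF,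
      Finset.sum_singleton]
    have hi : intAct ends ∅ = ∅ := by rw [intAct, hE, Finset.filter_empty]
    have he : extAct ends ∅ = ∅ := by rw [extAct, hE, Finset.filter_empty]
    rw [hi, he]
    simp
  | succ n ih =>
    intro V E _ _ _ _ ends hcard
    have hEne : Nonempty E := Fintype.card_pos_iff.mp (by omega)
    have hUne : (Finset.univ : Finset E).Nonempty := Finset.univ_nonempty
    set g : E := Finset.univ.min' hUne with hgdef
    have hmin : ∀ f : E, f ≠ g → g < f := fun f hf =>
      lt_of_le_of_ne (Finset.min'_le _ f (Finset.mem_univ f)) (Ne.symm hf)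
    have hcardsub : Fintype.card {e : E // e ≠ g} = n := by
      have h1 : Fintype.card {e : E // e ≠ g}
          = (Finset.univ.filter (fun e : E => e ≠ g)).card := Fintype.card_subtype _
      rw [Finset.filter_ne', Finset.card_erase_of_mem (Finset.mem_univ g)] at h1
      have h2 : (Finset.univ : Finset E).card = Fintype.card E := Finset.card_univ
      omega
    obtain ⟨a, b, hg⟩ := sym2_pair (V := V) (ends g)
    rw [hcard]
    rw [← Finset.sum_filter_add_sum_filter_not
      (Finset.univ.powerset.filter (IsSpanningForest ends)) (fun F => g ∈ F)
      (fun F => 2 ^ ((intAct ends F).card + (extAct ends F).card))]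
    by_cases hd : (ends g).IsDiag
    · -- loop case
      have hab : a = b := by rw [hg] at hd; exact (Sym2.mk_isDiag_iff).mp hd
      have hNB : kc ends (Finset.univ.erase g) = kc ends (Finset.univ : Finset E) := by
        conv_rhs => rw [← Finset.insert_erase (Finset.mem_univ g)]
        rw [kc_insert_of_reach hg (Or.inl hab)]
      have hempty : (Finset.univ.powerset.filter (IsSpanningForest ends)).filter
          (fun F => g ∈ F) = ∅ := by
        rw [Finset.filter_eq_empty_iff]
        intro F hF
        rw [Finset.mem_filter] at hF
        exact fun h => g_not_in_sf_loop hd hF.2 h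
      rw [hempty, Finset.sum_empty, zero_add]
      have hsum : ∑ F ∈ (Finset.univ.powerset.filter (IsSpanningForest ends)).filter
            (fun F => ¬ g ∈ F), 2 ^ ((intAct ends F).card + (extAct ends F).card)
          = ∑ A' ∈ Finset.univ.powerset.filter (IsSpanningForest (dEnds ends g)),
            2 ^ ((intAct (dEnds ends g) A').card + (extAct (dEnds ends g) A').card + 1) := by
        refine Finset.sum_bij' (fun F _ => F.subtype (· ≠ g)) (fun A' _ => dmap g A')
          ?_ ?_ ?_ ?_ ?_
        · intro F hF
          rw [Finset.mem_filter, Finset.mem_filter] at hF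
          obtain ⟨⟨-, hSF⟩, hgF⟩ := hF
          rw [Finset.mem_filter]
          refine ⟨Finset.mem_powerset.mpr (Finset.subset_univ _), ?_⟩
          rw [sf_del_iff hNB, dmap_smap, Finset.erase_eq_of_notMem hgF]
          exact hSF
        · intro A' hA'
          rw [Finset.mem_filter] at hA'
          rw [Finset.mem_filter, Finset.mem_filter]
          exact ⟨⟨Finset.mem_powerset.mpr (Finset.subset_univ _),
            (sf_del_iff hNB A').mp hA'.2⟩, g_not_mem_dmap A'⟩
        · intro F hF
          rw [Finset.mem_filter, Finset.mem_filter] at hF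
          rw [dmap_smap, Finset.erase_eq_of_notMem hF.2]
        · intro A' hA'
          exact smap_dmap A'
        · intro F hF
          rw [Finset.mem_filter, Finset.mem_filter] at hF
          obtain ⟨⟨-, hSF⟩, hgF⟩ := hF
          have hFeq : F = dmap g (F.subtype (· ≠ g)) := by
            rw [dmap_smap, Finset.erase_eq_of_notMem hgF]
          conv_lhs => rw [hFeq]
          rw [intAct_del hmin hNB, extAct_del_loop hmin hNB hd, card_dmap,
            Finset.card_insert_of_notMem (g_not_mem_dmap _), card_dmap]
          exact congrArg (fun k => (2:ℕ) ^ k) (by omega)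
      rw [hsum]
      have hIH := ih (dEnds ends g) hcardsub
      rw [hcardsub] at hIH
      calc ∑ A' ∈ Finset.univ.powerset.filter (IsSpanningForest (dEnds ends g)),
            2 ^ ((intAct (dEnds ends g) A').card + (extAct (dEnds ends g) A').card + 1)
          = 2 * ∑ A' ∈ Finset.univ.powerset.filter (IsSpanningForest (dEnds ends g)),
            2 ^ ((intAct (dEnds ends g) A').card + (extAct (dEnds ends g) A').card) := by
            rw [Finset.mul_sum]
            refine Finset.sum_congr rfl (fun x _ => ?_)
            ring
        _ = 2 * 2 ^ n := by rw [hIH]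
        _ = 2 ^ (n + 1) := by ring
    · -- non-loop case
      have hab : a ≠ b := by
        intro h
        exact hd (by rw [hg, h]; exact Sym2.mk_isDiag_iff.mpr rfl)
      by_cases hNB : kc ends (Finset.univ.erase g) = kc ends (Finset.univ : Finset E)
      · -- ordinary edge: both branches contribute 2^n
        have hsum1 : ∑ F ∈ (Finset.univ.powerset.filter (IsSpanningForest ends)).filter
              (fun F => g ∈ F), 2 ^ ((intAct ends F).card + (extAct ends F).card)
            = ∑ A' ∈ Finset.univ.powerset.filter (IsSpanningForest (cEnds ends g a b)),
              2 ^ ((intAct (cEnds ends g a b) A').card + (extAct (cEnds ends g a b) A').card) := by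
          refine Finset.sum_bij' (fun F _ => F.subtype (· ≠ g)) (fun A' _ => insert g (dmap g A'))
            ?_ ?_ ?_ ?_ ?_
          · intro F hF
            rw [Finset.mem_filter, Finset.mem_filter] at hF
            obtain ⟨⟨-, hSF⟩, hgF⟩ := hF
            rw [Finset.mem_filter]
            refine ⟨Finset.mem_powerset.mpr (Finset.subset_univ _), ?_⟩
            rw [sf_con_iff hg hab, dmap_smap, Finset.insert_erase hgF]
            exact hSF
          · intro A' hA'
            rw [Finset.mem_filter] at hA'
            rw [Finset.mem_filter, Finset.mem_filter]
            exact ⟨⟨Finset.mem_powerset.mpr (Finset.subset_univ _),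
              (sf_con_iff hg hab A').mp hA'.2⟩, Finset.mem_insert_self g _⟩
          · intro F hF
            rw [Finset.mem_filter, Finset.mem_filter] at hF
            rw [dmap_smap, Finset.insert_erase hF.2]
          · intro A' hA'
            exact smap_insert_dmap A'
          · intro F hF
            rw [Finset.mem_filter, Finset.mem_filter] at hF
            obtain ⟨⟨-, hSF⟩, hgF⟩ := hF
            have hFeq : F = insert g (dmap g (F.subtype (· ≠ g))) := by
              rw [dmap_smap, Finset.insert_erase hgF]
            have hSF' : IsSpanningForest ends (insert g (dmap g (F.subtype (· ≠ g)))) :=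
              hFeq ▸ hSF
            conv_lhs => rw [hFeq]
            rw [intAct_con_nonbridge hmin hNB hg hab _ hSF', extAct_con hmin hg hab,
              card_dmap, card_dmap]
        have hsum2 : ∑ F ∈ (Finset.univ.powerset.filter (IsSpanningForest ends)).filter
              (fun F => ¬ g ∈ F), 2 ^ ((intAct ends F).card + (extAct ends F).card)
            = ∑ A' ∈ Finset.univ.powerset.filter (IsSpanningForest (dEnds ends g)),
              2 ^ ((intAct (dEnds ends g) A').card + (extAct (dEnds ends g) A').card) := by
          refine Finset.sum_bij' (fun F _ => F.subtype (· ≠ g)) (fun A' _ => dmap g A')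
            ?_ ?_ ?_ ?_ ?_
          · intro F hF
            rw [Finset.mem_filter, Finset.mem_filter] at hF
            obtain ⟨⟨-, hSF⟩, hgF⟩ := hF
            rw [Finset.mem_filter]
            refine ⟨Finset.mem_powerset.mpr (Finset.subset_univ _), ?_⟩
            rw [sf_del_iff hNB, dmap_smap, Finset.erase_eq_of_notMem hgF]
            exact hSF
          · intro A' hA'
            rw [Finset.mem_filter] at hA'
            rw [Finset.mem_filter, Finset.mem_filter]
            exact ⟨⟨Finset.mem_powerset.mpr (Finset.subset_univ _),
              (sf_del_iff hNB A').mp hA'.2⟩, g_not_mem_dmap A'⟩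
          · intro F hF
            rw [Finset.mem_filter, Finset.mem_filter] at hF
            rw [dmap_smap, Finset.erase_eq_of_notMem hF.2]
          · intro A' hA'
            exact smap_dmap A'
          · intro F hF
            rw [Finset.mem_filter, Finset.mem_filter] at hF
            obtain ⟨⟨-, hSF⟩, hgF⟩ := hF
            have hFeq : F = dmap g (F.subtype (· ≠ g)) := by
              rw [dmap_smap, Finset.erase_eq_of_notMem hgF]
            have hSF' : IsSpanningForest ends (dmap g (F.subtype (· ≠ g))) := hFeq ▸ hSF
            conv_lhs => rw [hFeq]
            rw [intAct_del hmin hNB, extAct_del_nonloop hmin hNB hd _ hSF',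
              card_dmap, card_dmap]
        have ihc := ih (cEnds ends g a b) hcardsub
        have ihd := ih (dEnds ends g) hcardsub
        rw [hcardsub] at ihc ihd
        rw [hsum1, hsum2, ihc, ihd, pow_succ]
        ring
      · -- bridge: every spanning forest contains g
        have hempty : (Finset.univ.powerset.filter (IsSpanningForest ends)).filter
            (fun F => ¬ g ∈ F) = ∅ := by
          rw [Finset.filter_eq_empty_iff]
          intro F hF
          rw [Finset.mem_filter] at hF
          intro h
          exact no_sf_of_bridge hNB h hF.2
        rw [hempty, Finset.sum_empty, add_zero]
        have hsum1 : ∑ F ∈ (Finset.univ.powerset.filter (IsSpanningForest ends)).filter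
              (fun F => g ∈ F), 2 ^ ((intAct ends F).card + (extAct ends F).card)
            = ∑ A' ∈ Finset.univ.powerset.filter (IsSpanningForest (cEnds ends g a b)),
              2 ^ ((intAct (cEnds ends g a b) A').card + (extAct (cEnds ends g a b) A').card + 1) := by
          refine Finset.sum_bij' (fun F _ => F.subtype (· ≠ g)) (fun A' _ => insert g (dmap g A'))
            ?_ ?_ ?_ ?_ ?_
          · intro F hF
            rw [Finset.mem_filter, Finset.mem_filter] at hF
            obtain ⟨⟨-, hSF⟩, hgF⟩ := hF
            rw [Finset.mem_filter]
            refine ⟨Finset.mem_powerset.mpr (Finset.subset_univ _), ?_⟩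
            rw [sf_con_iff hg hab, dmap_smap, Finset.insert_erase hgF]
            exact hSF
          · intro A' hA'
            rw [Finset.mem_filter] at hA'
            rw [Finset.mem_filter, Finset.mem_filter]
            exact ⟨⟨Finset.mem_powerset.mpr (Finset.subset_univ _),
              (sf_con_iff hg hab A').mp hA'.2⟩, Finset.mem_insert_self g _⟩
          · intro F hF
            rw [Finset.mem_filter, Finset.mem_filter] at hF
            rw [dmap_smap, Finset.insert_erase hF.2]
          · intro A' hA'
            exact smap_insert_dmap A'
          · intro F hF
            rw [Finset.mem_filter, Finset.mem_filter] at hF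
            obtain ⟨⟨-, hSF⟩, hgF⟩ := hF
            have hFeq : F = insert g (dmap g (F.subtype (· ≠ g))) := by
              rw [dmap_smap, Finset.insert_erase hgF]
            conv_lhs => rw [hFeq]
            rw [intAct_con_bridge hNB hg hab, extAct_con hmin hg hab,
              Finset.card_insert_of_notMem (g_not_mem_dmap _), card_dmap, card_dmap]
            exact congrArg (fun k => (2:ℕ) ^ k) (by omega)
        rw [hsum1]
        have ihc := ih (cEnds ends g a b) hcardsub
        rw [hcardsub] at ihc
        calc ∑ A' ∈ Finset.univ.powerset.filter (IsSpanningForest (cEnds ends g a b)),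
              2 ^ ((intAct (cEnds ends g a b) A').card + (extAct (cEnds ends g a b) A').card + 1)
            = 2 * ∑ A' ∈ Finset.univ.powerset.filter (IsSpanningForest (cEnds ends g a b)),
              2 ^ ((intAct (cEnds ends g a b) A').card + (extAct (cEnds ends g a b) A').card) := by
              rw [Finset.mul_sum]
              refine Finset.sum_congr rfl (fun x _ => ?_)
              ring
          _ = 2 * 2 ^ n := by rw [ihc]
          _ = 2 ^ (n + 1) := by rw [pow_succ]; ring
end main

/-- `∑_{F spanning forest} 2^{i(F)+e(F)} = 2^{|E|}`. -/
theorem sum_two_pow_activities {V E : Type} [Fintype V] [Fintype E] [DecidableEq E]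
    [LinearOrder E] (ends : E → Sym2 V) :
    ∑ F ∈ Finset.univ.powerset.filter (IsSpanningForest ends),
        2 ^ ((intAct ends F).card + (extAct ends F).card) =
      2 ^ Fintype.card E :=
  main_aux (Fintype.card E) ends rfl
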